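/- Reduction to the worst case q = ∞ (equal-probability case): let Γ ∈ (0,1], let g : [0,∞) → [0,1] be nondecreasing with 1 − g(0) ≤ Γ, and let ℓ ≥ 0. If ∫_0^ℓ e^{−θ} g(θ) dθ + (2 e^{−ℓ/2} − e^{−ℓ})(1 − g(ℓ)) ≥ Γ, then for every q ≥ 0: ∫_0^ℓ e^{−θ} g(θ) dθ + (1 − g(ℓ)) · ∫_0^∞ e^{−θ} ( min{q, θ} − (ℓ − θ)^+ )^+ dθ ≥ Γ · (1 − e^{−q}). -/

import Mathlib

open MeasureTheory Real

section AuxLemmas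
open Set Filter


lemma aux_tail (t : ℝ) :
    IntegrableOn (fun x => Real.exp (-x) * (x - t)) (Set.Ioi t) ∧
    ∫ x in Set.Ioi t, Real.exp (-x) * (x - t) = Real.exp (-t) := by
  have hderiv : ∀ x ∈ Set.Ici t, HasDerivAt (fun x => -(Real.exp (-x) * (x - t + 1)))
      (Real.exp (-x) * (x - t)) x := by
    intro x _
    have h1 : HasDerivAt (fun x : ℝ => Real.exp (-x)) (-Real.exp (-x)) x := by
      simpa using ((hasDerivAt_neg x).exp)
    have h2 : HasDerivAt (fun x : ℝ => x - t + 1) 1 x := by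
      simpa using ((hasDerivAt_id x).sub_const t).add_const 1
    have := (h1.mul h2).neg
    exact this.congr_deriv (by ring)
  have hpos : ∀ x ∈ Set.Ioi t, 0 ≤ Real.exp (-x) * (x - t) := by
    intro x hx
    exact mul_nonneg (Real.exp_pos _).le (by simp at hx; linarith)
  have htend : Tendsto (fun x => -(Real.exp (-x) * (x - t + 1))) atTop (nhds 0) := by
    have h1 := tendsto_pow_mul_exp_neg_atTop_nhds_zero 1
    have h2 : Tendsto (fun x : ℝ => Real.exp (-x)) atTop (nhds 0) :=
      tendsto_exp_neg_atTop_nhds_zero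
    have : Tendsto (fun x : ℝ => -(x ^ 1 * Real.exp (-x) + (1 - t) * Real.exp (-x)))
        atTop (nhds (-(0 + (1 - t) * 0))) := ((h1.add (h2.const_mul (1 - t)))).neg
    simpa [mul_comm] using this.congr (fun x => by ring)
  constructor
  · exact integrableOn_Ioi_deriv_of_nonneg' hderiv hpos htend
  · have := integral_Ioi_of_hasDerivAt_of_nonneg' hderiv hpos htend
    simpa using this

lemma aux_full (t : ℝ) (ht : 0 ≤ t) :
    IntegrableOn (fun x => Real.exp (-x) * max (x - t) 0) (Set.Ioi 0) ∧
    ∫ x in Set.Ioi (0 : ℝ), Real.exp (-x) * max (x - t) 0 = Real.exp (-t) := by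
  have hcont : Continuous (fun x => Real.exp (-x) * max (x - t) 0) := by
    continuity
  have hunion : Set.Ioc (0:ℝ) t ∪ Set.Ioi t = Set.Ioi 0 := Set.Ioc_union_Ioi_eq_Ioi ht
  have hIoc : IntegrableOn (fun x => Real.exp (-x) * max (x - t) 0) (Set.Ioc 0 t) :=
    hcont.integrableOn_Ioc
  have hcong : Set.EqOn (fun x => Real.exp (-x) * max (x - t) 0)
      (fun x => Real.exp (-x) * (x - t)) (Set.Ioi t) := by
    intro x hx
    simp only
    rw [max_eq_left (by simp at hx; linarith)]
  have hIoi : IntegrableOn (fun x => Real.exp (-x) * max (x - t) 0) (Set.Ioi t) :=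
    ((aux_tail t).1.congr_fun hcong.symm measurableSet_Ioi)
  have hdisj : Disjoint (Set.Ioc (0:ℝ) t) (Set.Ioi t) := by
    apply Set.disjoint_left.2
    intro x hx hx2
    exact absurd hx.2 (not_le.2 hx2)
  constructor
  · rw [← hunion]; exact hIoc.union hIoi
  · rw [← hunion, setIntegral_union hdisj measurableSet_Ioi hIoc hIoi]
    have h0 : ∫ x in Set.Ioc (0:ℝ) t, Real.exp (-x) * max (x - t) 0 = 0 := by
      rw [setIntegral_congr_fun measurableSet_Ioc
        (g := fun _ => (0:ℝ)) (fun x hx => by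
          simp only
          rw [max_eq_right (by linarith [hx.2])]; ring)]
      simp
    rw [h0, setIntegral_congr_fun measurableSet_Ioi hcong, (aux_tail t).2, zero_add]

lemma bracket_ineq (ℓ q θ : ℝ) (hℓ : 0 ≤ ℓ) (hq : 0 ≤ q) (hθ : 0 < θ) :
    2 * max (θ - ℓ/2) 0 - max (θ - ℓ) 0 - max (θ - q) 0
      ≤ max (min q θ - max (ℓ - θ) 0) 0 := by
  rcases le_total θ ℓ with h1|h1 <;> rcases le_total θ q with h2|h2 <;>
    rcases le_total θ (ℓ/2) with h3|h3 <;>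
    simp [min_def, max_def] <;> split_ifs <;> linarith


end AuxLemmas

/-- Reduction to the worst case `q = ∞` in the equal-probability analysis of
Stochastic Balance. -/
theorem worst_case_q_infty_equal_prob
    (Γ : ℝ) (hΓ : Γ ∈ Set.Ioc (0 : ℝ) 1)
    (g : ℝ → ℝ) (hg : MonotoneOn g (Set.Ici 0))
    (hrange : ∀ x ∈ Set.Ici (0 : ℝ), g x ∈ Set.Icc (0 : ℝ) 1)
    (hg0 : 1 - g 0 ≤ Γ) (ℓ : ℝ) (hℓ : 0 ≤ ℓ)
    (hq_infty : (∫ θ in (0 : ℝ)..ℓ, Real.exp (-θ) * g θ)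
        + (2 * Real.exp (-ℓ / 2) - Real.exp (-ℓ)) * (1 - g ℓ) ≥ Γ) :
    ∀ q ≥ (0 : ℝ),
      (∫ θ in (0 : ℝ)..ℓ, Real.exp (-θ) * g θ)
        + (1 - g ℓ) *
          ∫ θ in Set.Ioi (0 : ℝ),
            Real.exp (-θ) * max (min q θ - max (ℓ - θ) 0) 0
      ≥ Γ * (1 - Real.exp (-q)) := by
  intro q hq
  have hI1 := aux_full (ℓ/2) (by linarith)
  have hI2 := aux_full ℓ hℓ
  have hI3 := aux_full q hq
  have hI0 := aux_full 0 le_rfl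
  set f : ℝ → ℝ := fun θ => Real.exp (-θ) * max (min q θ - max (ℓ - θ) 0) 0 with hf
  have hfc : Continuous f := by
    apply Continuous.mul (by continuity)
    exact (continuous_const.min continuous_id).sub
      ((continuous_const.sub continuous_id).max continuous_const) |>.max continuous_const
  -- integrability of f on Ioi 0
  have hIf : IntegrableOn f (Set.Ioi 0) := by
    apply MeasureTheory.Integrable.mono hI0.1 (hfc.aestronglyMeasurable.restrict)
    filter_upwards [ae_restrict_mem measurableSet_Ioi] with x hx
    simp only [Set.mem_Ioi] at hx
    have h1 : 0 ≤ f x := mul_nonneg (Real.exp_pos _).le (le_max_right _ _)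
    have h2 : f x ≤ Real.exp (-x) * max (x - 0) 0 := by
      apply mul_le_mul_of_nonneg_left _ (Real.exp_pos _).le
      apply max_le _ (by simp [hx.le])
      calc min q x - max (ℓ - x) 0 ≤ x - 0 := by
            have := min_le_right q x
            have := le_max_right (ℓ - x) 0
            linarith
        _ ≤ max (x - 0) 0 := le_max_left _ _
    rw [Real.norm_eq_abs, Real.norm_eq_abs, abs_of_nonneg h1,
      abs_of_nonneg (mul_nonneg (Real.exp_pos _).le (le_max_right _ _))]
    exact h2
  -- lower bound on the integral of f
  have hkey : ∫ θ in Set.Ioi (0:ℝ), f θ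
      ≥ 2 * Real.exp (-(ℓ/2)) - Real.exp (-ℓ) - Real.exp (-q) := by
    have hInt : IntegrableOn (fun θ => 2 * (Real.exp (-θ) * max (θ - ℓ/2) 0)
        - Real.exp (-θ) * max (θ - ℓ) 0 - Real.exp (-θ) * max (θ - q) 0) (Set.Ioi 0) :=
      ((hI1.1.const_mul 2).sub hI2.1).sub hI3.1
    have hmono : ∫ θ in Set.Ioi (0:ℝ), (2 * (Real.exp (-θ) * max (θ - ℓ/2) 0)
        - Real.exp (-θ) * max (θ - ℓ) 0 - Real.exp (-θ) * max (θ - q) 0)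
        ≤ ∫ θ in Set.Ioi (0:ℝ), f θ := by
      apply setIntegral_mono_on hInt hIf measurableSet_Ioi
      intro x hx
      simp only [Set.mem_Ioi] at hx
      have hb := bracket_ineq ℓ q x hℓ hq hx
      have := mul_le_mul_of_nonneg_left hb (Real.exp_pos (-x)).le
      simp only [hf]
      nlinarith [this]
    have hIa : Integrable (fun θ => 2 * (Real.exp (-θ) * max (θ - ℓ/2) 0))
        (volume.restrict (Set.Ioi 0)) := hI1.1.const_mul 2
    have hIb : Integrable (fun θ => 2 * (Real.exp (-θ) * max (θ - ℓ/2) 0)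
        - Real.exp (-θ) * max (θ - ℓ) 0) (volume.restrict (Set.Ioi 0)) := hIa.sub hI2.1
    rw [MeasureTheory.integral_sub hIb hI3.1, MeasureTheory.integral_sub hIa hI2.1,
      MeasureTheory.integral_const_mul, hI1.2, hI2.2, hI3.2] at hmono
    linarith
  -- algebra
  have hgl1 : g ℓ ≤ 1 := (hrange ℓ hℓ).2
  have hg0l : g 0 ≤ g ℓ := hg (Set.self_mem_Ici) hℓ hℓ
  have hc0 : 0 ≤ 1 - g ℓ := by linarith
  have hcΓ : 1 - g ℓ ≤ Γ := by linarith
  have heq : Real.exp (-ℓ/2) = Real.exp (-(ℓ/2)) := by ring_nf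
  have hexp : 0 < Real.exp (-q) := Real.exp_pos _
  set A := ∫ θ in (0:ℝ)..ℓ, Real.exp (-θ) * g θ
  set c := 1 - g ℓ
  set Fq := ∫ θ in Set.Ioi (0:ℝ), f θ
  rw [heq] at hq_infty
  have h1 : c * (2 * Real.exp (-(ℓ/2)) - Real.exp (-ℓ) - Real.exp (-q)) ≤ c * Fq :=
    mul_le_mul_of_nonneg_left hkey hc0
  have h2 : c * Real.exp (-q) ≤ Γ * Real.exp (-q) :=
    mul_le_mul_of_nonneg_right hcΓ hexp.le
  have h4 : (2 * Real.exp (-(ℓ/2)) - Real.exp (-ℓ)) * c - c * Real.exp (-q) ≤ c * Fq := by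
    linarith [h1]
  clear_value A c Fq
  linarith [h4, h2, hq_infty]
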